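/- Let b ∈ (0,3], T > 0. Assume the uniqueness property for the b-equation: if v₁ and v₂ are classical solutions of the b-equation on [0,T)×ℝ with v₁(t₁,x) = v₂(t₁,x) for all x ∈ ℝ at some time t₁ ∈ (0,T), then v₁ = v₂ on [0,T)×ℝ (this follows from local well-posedness of the Cauchy problem in H^s, s > 3/2). If u is a classical solution of the b-equation on [0,T)×ℝ that vanishes identically on a nonempty open subset of (0,T)×ℝ, then u(t,x) = 0 for all (t,x) ∈ [0,T)×ℝ. -/

import Mathlib

open MeasureTheory Set

/-- The inverse Helmholtz operator `Λ⁻² = (1 - ∂ₓ²)⁻¹` on the line, given by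
convolution with the kernel `e^{-|x|}/2`. -/
noncomputable def lam2 (w : ℝ → ℝ) (x : ℝ) : ℝ :=
  (1/2) * ∫ y : ℝ, Real.exp (-|x - y|) * w y

/-- A classical solution of the `b`-equation
`uₜ + u uₓ = -∂ₓΛ⁻²((b/2)u² + ((3-b)/2)uₓ²)` on `[0,T) × ℝ`: for each `t ∈ [0,T)`,
`u(t,·)` is continuously differentiable with `u(t,·)` and `∂ₓu(t,·)` continuous,
bounded and integrable; `∂ₜu` exists on `(0,T) × ℝ`; and the equation holds
pointwise on `(0,T) × ℝ`. -/
def IsBEquationSolution (b T : ℝ) (u : ℝ → ℝ → ℝ) : Prop :=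
  (∀ t ∈ Set.Ico (0:ℝ) T,
    ContDiff ℝ 1 (u t) ∧
    (∃ C : ℝ, ∀ x, |u t x| ≤ C) ∧ Integrable (u t) ∧
    (∃ C : ℝ, ∀ x, |deriv (u t) x| ≤ C) ∧ Integrable (deriv (u t))) ∧
  (∀ t ∈ Set.Ioo (0:ℝ) T, ∀ x : ℝ, DifferentiableAt ℝ (fun s => u s x) t) ∧
  (∀ t ∈ Set.Ioo (0:ℝ) T, ∀ x : ℝ,
    deriv (fun s => u s x) t + u t x * deriv (u t) x =
      -(deriv (lam2 (fun y => (b/2) * (u t y)^2 + ((3-b)/2) * (deriv (u t) y)^2)) x))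

section key
variable {F : ℝ → ℝ}

lemma hf_int (hF : Continuous F) (hFint : Integrable F) (x : ℝ) :
    IntegrableOn (fun y => Real.exp y * F y) (Iic x) := by
  refine Integrable.mono ((hFint.restrict (s := Iic x)).const_mul (Real.exp x))
    ((Real.continuous_exp.mul hF).aestronglyMeasurable.restrict) ?_
  · filter_upwards [ae_restrict_mem measurableSet_Iic] with y hy
    simp only [norm_mul, Real.norm_eq_abs, Real.abs_exp]
    gcongr
    exact hy

lemma hg_int (hF : Continuous F) (hFint : Integrable F) (x : ℝ) :
    IntegrableOn (fun y => Real.exp (-y) * F y) (Ioi x) := by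
  refine Integrable.mono ((hFint.restrict (s := Ioi x)).const_mul (Real.exp (-x)))
    (((Real.continuous_exp.comp continuous_neg).mul hF).aestronglyMeasurable.restrict) ?_
  · filter_upwards [ae_restrict_mem measurableSet_Ioi] with y hy
    simp only [norm_mul, Real.norm_eq_abs, Real.abs_exp]
    gcongr
    linarith [le_of_lt (mem_Ioi.mp hy)]

lemma lam2_split (hF : Continuous F) (hFpos : ∀ y, 0 ≤ F y) (hFint : Integrable F) (x : ℝ) :
    lam2 F x = (1/2) * (Real.exp (-x) * ∫ y in Iic x, Real.exp y * F y)
      + (1/2) * (Real.exp x * ∫ y in Ioi x, Real.exp (-y) * F y) := by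
  have hker : Integrable (fun y => Real.exp (-|x - y|) * F y) := by
    refine Integrable.mono hFint
      (((Real.continuous_exp.comp (continuous_const.sub continuous_id).abs.neg).mul hF).aestronglyMeasurable) ?_
    filter_upwards with y
    simp only [norm_mul, Real.norm_eq_abs, Real.abs_exp]
    calc Real.exp (-|x - y|) * |F y| ≤ 1 * |F y| := by
          gcongr; exact Real.exp_le_one_iff.mpr (neg_nonpos.mpr (abs_nonneg _))
      _ = |F y| := one_mul _
  have hsplit := intervalIntegral.integral_Iic_add_Ioi (b := x) (hker.integrableOn) (hker.integrableOn)
  have h1 : ∫ y in Iic x, Real.exp (-|x - y|) * F y = Real.exp (-x) * ∫ y in Iic x, Real.exp y * F y := by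
    rw [← integral_const_mul]
    refine setIntegral_congr_fun measurableSet_Iic (fun y hy => ?_)
    have : |x - y| = x - y := abs_of_nonneg (by simpa using hy)
    rw [this, ← mul_assoc, ← Real.exp_add]
    ring_nf
  have h2 : ∫ y in Ioi x, Real.exp (-|x - y|) * F y = Real.exp x * ∫ y in Ioi x, Real.exp (-y) * F y := by
    rw [← integral_const_mul]
    refine setIntegral_congr_fun measurableSet_Ioi (fun y hy => ?_)
    have : |x - y| = y - x := by rw [abs_of_nonpos (by simp at hy ⊢; linarith)]; ring
    rw [this, ← mul_assoc, ← Real.exp_add]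
    ring_nf
  rw [lam2, ← hsplit, h1, h2]
  ring

lemma hasDerivAt_A (hF : Continuous F) (hFint : Integrable F) (x : ℝ) :
    HasDerivAt (fun x => ∫ y in Iic x, Real.exp y * F y) (Real.exp x * F x) x := by
  set f := fun y => Real.exp y * F y with hfdef
  have hfc : Continuous f := Real.continuous_exp.mul hF
  have heq : ∀ z : ℝ, (∫ y in Iic z, f y) = (∫ y in Iic (0:ℝ), f y) + ∫ y in (0:ℝ)..z, f y := by
    intro z
    rw [← intervalIntegral.integral_Iic_sub_Iic (hf_int hF hFint 0) (hf_int hF hFint z)]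
    ring
  have : HasDerivAt (fun z => (∫ y in Iic (0:ℝ), f y) + ∫ y in (0:ℝ)..z, f y) (f x) x := by
    refine (intervalIntegral.integral_hasDerivAt_right
      (hfc.intervalIntegrable 0 x)
      (hfc.aestronglyMeasurable.stronglyMeasurableAtFilter)
      hfc.continuousAt).const_add _
  exact this.congr_of_eventuallyEq (Filter.Eventually.of_forall heq)

lemma B_eq (hF : Continuous F) (hFint : Integrable F) {a x : ℝ} (hax : a ≤ x) :
    (∫ y in Ioi x, Real.exp (-y) * F y)
      = (∫ y in Ioi a, Real.exp (-y) * F y) - ∫ y in a..x, Real.exp (-y) * F y := by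
  set g := fun y => Real.exp (-y) * F y
  have hsplit : (∫ y in Ioi a, g y) = (∫ y in Ioc a x, g y) + ∫ y in Ioi x, g y := by
    rw [← setIntegral_union (Ioc_disjoint_Ioi le_rfl) measurableSet_Ioi
      ((hg_int hF hFint a).mono_set Ioc_subset_Ioi_self) (hg_int hF hFint x),
      Ioc_union_Ioi_eq_Ioi hax]
  rw [intervalIntegral.integral_of_le hax, hsplit]
  ring

lemma hasDerivAt_B (hF : Continuous F) (hFint : Integrable F) (x : ℝ) :
    HasDerivAt (fun x => ∫ y in Ioi x, Real.exp (-y) * F y) (-(Real.exp (-x) * F x)) x := by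
  set g := fun y => Real.exp (-y) * F y with hgdef
  have hgc : Continuous g := (Real.continuous_exp.comp continuous_neg).mul hF
  set a := x - 1
  have heq : ∀ᶠ z in nhds x, (∫ y in Ioi z, g y)
      = (∫ y in Ioi a, g y) - ∫ y in a..z, g y := by
    filter_upwards [eventually_gt_nhds (show a < x by simp [a])] with z hz
    exact B_eq hF hFint hz.le
  have : HasDerivAt (fun z => (∫ y in Ioi a, g y) - ∫ y in a..z, g y) (-(g x)) x := by
    exact (intervalIntegral.integral_hasDerivAt_right
      (hgc.intervalIntegrable a x)
      (hgc.aestronglyMeasurable.stronglyMeasurableAtFilter)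
      hgc.continuousAt).const_sub _
  exact this.congr_of_eventuallyEq heq

lemma hasDerivAt_lam2 (hF : Continuous F) (hFpos : ∀ y, 0 ≤ F y) (hFint : Integrable F) (x : ℝ) :
    HasDerivAt (lam2 F) ((1/2) * (Real.exp x * (∫ y in Ioi x, Real.exp (-y) * F y)
      - Real.exp (-x) * ∫ y in Iic x, Real.exp y * F y)) x := by
  have h1 := ((((Real.hasDerivAt_exp (-x)).comp x (hasDerivAt_neg x)).mul
        (hasDerivAt_A hF hFint x)).const_mul (1/2 : ℝ)).add
      (((Real.hasDerivAt_exp x).mul (hasDerivAt_B hF hFint x)).const_mul (1/2 : ℝ))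
  have h2 := h1.congr_of_eventuallyEq (Filter.Eventually.of_forall
    (fun z => lam2_split hF hFpos hFint z))
  convert h2 using 1
  · rfl
  · rfl
  have he : Real.exp (-x) * Real.exp x = 1 := by
    rw [← Real.exp_add]; simp
  simp only [Function.comp_apply]
  nlinarith [he]

lemma F_eq_zero (hF : Continuous F) (hFpos : ∀ y, 0 ≤ F y) (hFint : Integrable F)
    {a c : ℝ} (hac : a < c) (hFzero : ∀ x ∈ Ioo a c, F x = 0)
    (hderiv : ∀ x ∈ Ioo a c, deriv (lam2 F) x = 0) : ∀ y, F y = 0 := by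
  set A := fun x => ∫ y in Iic x, Real.exp y * F y with hA
  set B := fun x => ∫ y in Ioi x, Real.exp (-y) * F y with hB
  -- from the derivative vanishing
  have hkey : ∀ x ∈ Ioo a c, Real.exp x * B x = Real.exp (-x) * A x := by
    intro x hx
    have h := (hasDerivAt_lam2 hF hFpos hFint x).deriv
    rw [hderiv x hx] at h
    have := h.symm
    nlinarith [this]
  -- choose two points
  set x₁ := a + (c - a)/3 with hx₁
  set x₂ := a + 2*(c - a)/3 with hx₂
  have hx₁m : x₁ ∈ Ioo a c := by constructor <;> (simp [hx₁]; linarith)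
  have hx₂m : x₂ ∈ Ioo a c := by constructor <;> (simp [hx₂]; linarith)
  have hx12 : x₁ < x₂ := by simp [hx₁, hx₂]; linarith
  -- A and B constant between x₁ and x₂
  have hIoc : Ioc x₁ x₂ ⊆ Ioo a c := fun y hy => ⟨lt_trans hx₁m.1 hy.1, lt_of_le_of_lt hy.2 hx₂m.2⟩
  have hAc : A x₂ = A x₁ := by
    have : A x₂ - A x₁ = ∫ y in x₁..x₂, Real.exp y * F y :=
      intervalIntegral.integral_Iic_sub_Iic (hf_int hF hFint x₁) (hf_int hF hFint x₂)
    have hz : ∫ y in x₁..x₂, Real.exp y * F y = 0 := by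
      rw [intervalIntegral.integral_of_le hx12.le]
      rw [setIntegral_congr_fun measurableSet_Ioc
        (fun y hy => by simp only [Pi.zero_apply]; rw [hFzero y (hIoc hy), mul_zero] : EqOn (fun y => Real.exp y * F y) 0 (Ioc x₁ x₂))]
      simp
    linarith [this, hz]
  have hBc : B x₂ = B x₁ := by
    have := B_eq hF hFint hx12.le
    have hz : ∫ y in x₁..x₂, Real.exp (-y) * F y = 0 := by
      rw [intervalIntegral.integral_of_le hx12.le]
      rw [setIntegral_congr_fun measurableSet_Ioc
        (fun y hy => by simp only [Pi.zero_apply]; rw [hFzero y (hIoc hy), mul_zero] : EqOn (fun y => Real.exp (-y) * F y) 0 (Ioc x₁ x₂))]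
      simp
    rw [hz] at this
    simpa using this
  -- nonnegativity of A, B
  have hApos : 0 ≤ A x₁ :=
    setIntegral_nonneg measurableSet_Iic (fun y _ => mul_nonneg (Real.exp_pos y).le (hFpos y))
  have hBpos : 0 ≤ B x₁ :=
    setIntegral_nonneg measurableSet_Ioi (fun y _ => mul_nonneg (Real.exp_pos _).le (hFpos y))
  -- deduce A x₁ = 0 and B x₁ = 0
  have h1 := hkey x₁ hx₁m
  have h2 := hkey x₂ hx₂m
  rw [hAc, hBc] at h2
  have hexp : Real.exp x₁ < Real.exp x₂ := Real.exp_lt_exp.mpr hx12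
  have hexp2 : Real.exp (-x₂) < Real.exp (-x₁) := Real.exp_lt_exp.mpr (by linarith)
  have hB0 : B x₁ = 0 := by
    nlinarith [Real.exp_pos x₁, Real.exp_pos x₂, Real.exp_pos (-x₁), Real.exp_pos (-x₂)]
  have hA0 : A x₁ = 0 := by
    nlinarith [Real.exp_pos x₁, Real.exp_pos (-x₁)]
  -- F vanishes a.e. on Iic x₁ and Ioi x₁
  have haeL : F =ᵐ[volume.restrict (Iic x₁)] 0 := by
    have hfz : (fun y => Real.exp y * F y) =ᵐ[volume.restrict (Iic x₁)] 0 := by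
      rw [← MeasureTheory.integral_eq_zero_iff_of_nonneg_ae
        (Filter.Eventually.of_forall (fun y => mul_nonneg (Real.exp_pos y).le (hFpos y)))
        (hf_int hF hFint x₁)]
      exact hA0
    filter_upwards [hfz] with y hy
    have := (Real.exp_pos y).ne'
    simp only [Pi.zero_apply] at hy ⊢
    exact (mul_eq_zero.mp hy).resolve_left this
  have haeR : F =ᵐ[volume.restrict (Ioi x₁)] 0 := by
    have hfz : (fun y => Real.exp (-y) * F y) =ᵐ[volume.restrict (Ioi x₁)] 0 := by
      rw [← MeasureTheory.integral_eq_zero_iff_of_nonneg_ae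
        (Filter.Eventually.of_forall (fun y => mul_nonneg (Real.exp_pos _).le (hFpos y)))
        (hg_int hF hFint x₁)]
      exact hB0
    filter_upwards [hfz] with y hy
    have := (Real.exp_pos (-y)).ne'
    simp only [Pi.zero_apply] at hy ⊢
    exact (mul_eq_zero.mp hy).resolve_left this
  have hae : F =ᵐ[volume] 0 := by
    have := ae_of_ae_restrict_of_ae_restrict_compl (Iic x₁) (p := fun y => F y = 0) haeL (by rwa [compl_Iic])
    exact this
  have := (Continuous.ae_eq_iff_eq volume hF continuous_const).mp hae
  exact fun y => congrFun this y

lemma zero_isSolution (b T : ℝ) : IsBEquationSolution b T (fun _ _ => 0) := by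
  have hd : deriv (fun _ : ℝ => (0:ℝ)) = fun _ => 0 := by
    funext x; exact deriv_const x 0
  refine ⟨fun t _ => ⟨contDiff_const, ⟨0, fun x => by simp⟩, by simp [integrable_zero],
    ⟨0, fun x => by simp [hd]⟩, by simp [hd, integrable_zero]⟩,
    fun t _ x => differentiableAt_const 0, fun t ht x => ?_⟩
  have h0 : (fun y : ℝ => (b/2) * (0:ℝ)^2 + ((3-b)/2) * (deriv (fun _ : ℝ => (0:ℝ)) y)^2)
      = fun _ => 0 := by
    funext y; simp [hd]
  have hlam : lam2 (fun y : ℝ => (b/2) * (0:ℝ)^2 + ((3-b)/2) * (deriv (fun _ : ℝ => (0:ℝ)) y)^2)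
      = fun _ => 0 := by
    funext x; rw [lam2]; simp [hd]
  rw [hlam]
  simp

/-- **Unique continuation for the `b`-equation via local well-posedness
(section 3.1).** Assuming the uniqueness property for classical solutions of the
`b`-equation (which follows from local well-posedness in `Hˢ`, `s > 3/2`), a
classical solution vanishing on a nonempty open subset of `(0,T) × ℝ` vanishes
identically. -/
theorem bEquation_unique_continuation_wellposed (b T : ℝ)
    (hb : b ∈ Set.Ioc (0:ℝ) 3) (hT : 0 < T)
    (huniq : ∀ v₁ v₂ : ℝ → ℝ → ℝ, IsBEquationSolution b T v₁ →
      IsBEquationSolution b T v₂ →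
      ∀ t₁ ∈ Set.Ioo (0:ℝ) T, (∀ x : ℝ, v₁ t₁ x = v₂ t₁ x) →
      ∀ t ∈ Set.Ico (0:ℝ) T, ∀ x : ℝ, v₁ t x = v₂ t x)
    (u : ℝ → ℝ → ℝ) (hu : IsBEquationSolution b T u)
    (Ω : Set (ℝ × ℝ)) (hΩopen : IsOpen Ω) (hΩne : Ω.Nonempty)
    (hΩsub : Ω ⊆ Set.Ioo (0:ℝ) T ×ˢ Set.univ)
    (hvan : ∀ p ∈ Ω, u p.1 p.2 = 0) :
    ∀ t ∈ Set.Ico (0:ℝ) T, ∀ x : ℝ, u t x = 0 := by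
  obtain ⟨⟨t₁, x₀⟩, hp⟩ := hΩne
  have ht₁ : t₁ ∈ Ioo (0:ℝ) T := (hΩsub hp).1
  obtain ⟨ε, hε, hball⟩ := Metric.isOpen_iff.mp hΩopen _ hp
  have hzero : ∀ s y : ℝ, |s - t₁| < ε → |y - x₀| < ε → u s y = 0 := by
    intro s y hs hy
    refine hvan (s, y) (hball ?_)
    rw [Metric.mem_ball, Prod.dist_eq]
    simp only [Real.dist_eq]
    exact max_lt hs hy
  obtain ⟨hC1, ⟨C, hCbd⟩, hint, ⟨C', hC'bd⟩, hint'⟩ := hu.1 t₁ ⟨ht₁.1.le, ht₁.2⟩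
  set F := fun y => (b/2) * (u t₁ y)^2 + ((3-b)/2) * (deriv (u t₁) y)^2 with hFdef
  have hucont : Continuous (u t₁) := hC1.continuous
  have hu'cont : Continuous (deriv (u t₁)) := hC1.continuous_deriv le_rfl
  have hFcont : Continuous F :=
    (continuous_const.mul (hucont.pow 2)).add (continuous_const.mul (hu'cont.pow 2))
  have hFpos : ∀ y, 0 ≤ F y := fun y => by
    have h1 := sq_nonneg (u t₁ y); have h2 := sq_nonneg (deriv (u t₁) y)
    have hb1 := hb.1; have hb2 := hb.2
    simp only [hFdef]
    nlinarith
  have hFint : Integrable F := by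
    have h1 : Integrable (fun y => (u t₁ y)^2) := by
      have := hint.bdd_mul hucont.aestronglyMeasurable (c := C) (Filter.Eventually.of_forall fun x => by simpa using hCbd x)
      simpa [pow_two] using this
    have h2 : Integrable (fun y => (deriv (u t₁) y)^2) := by
      have := hint'.bdd_mul hu'cont.aestronglyMeasurable (c := C') (Filter.Eventually.of_forall fun x => by simpa using hC'bd x)
      simpa [pow_two] using this
    exact (h1.const_mul _).add (h2.const_mul _)
  have hIlt : x₀ - ε < x₀ + ε := by linarith
  have hmem : ∀ x ∈ Ioo (x₀ - ε) (x₀ + ε), |x - x₀| < ε := by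
    intro x hx; rw [abs_sub_lt_iff]; constructor <;> [linarith [hx.2]; linarith [hx.1]]
  have huzero : ∀ x ∈ Ioo (x₀ - ε) (x₀ + ε), u t₁ x = 0 := fun x hx =>
    hzero t₁ x (by simpa using hε) (hmem x hx)
  have hFzero : ∀ x ∈ Ioo (x₀ - ε) (x₀ + ε), F x = 0 := by
    intro x hx
    have hd : deriv (u t₁) x = 0 := by
      have hev : u t₁ =ᶠ[nhds x] fun _ => 0 :=
        Filter.eventuallyEq_of_mem (Ioo_mem_nhds hx.1 hx.2) (fun y hy => huzero y hy)
      rw [hev.deriv_eq, deriv_const]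
    simp [hFdef, huzero x hx, hd]
  have hderiv0 : ∀ x ∈ Ioo (x₀ - ε) (x₀ + ε), deriv (lam2 F) x = 0 := by
    intro x hx
    have heq := hu.2.2 t₁ ht₁ x
    have hdt : deriv (fun s => u s x) t₁ = 0 := by
      have hev : (fun s => u s x) =ᶠ[nhds t₁] fun _ => 0 :=
        Filter.eventuallyEq_of_mem (Metric.ball_mem_nhds t₁ hε)
          (fun s hs => hzero s x (by simpa [Real.dist_eq] using hs) (hmem x hx))
      rw [hev.deriv_eq, deriv_const]
    rw [hdt, huzero x hx, zero_mul, add_zero] at heq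
    rw [← hFdef] at heq
    linarith [heq]
  have hF0 : ∀ y, F y = 0 := F_eq_zero hFcont hFpos hFint hIlt hFzero hderiv0
  have hu0 : ∀ y, u t₁ y = 0 := by
    intro y
    have := hF0 y
    simp only [hFdef] at this
    have h1 := sq_nonneg (u t₁ y); have h2 := sq_nonneg (deriv (u t₁) y)
    have hb1 := hb.1; have hb2 := hb.2
    have hct : 0 ≤ (3-b)/2 * deriv (u t₁) y ^ 2 := mul_nonneg (by linarith) h2
    have hs : u t₁ y ^ 2 = 0 := by nlinarith
    exact pow_eq_zero_iff two_ne_zero |>.mp hs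
  intro t ht x
  exact huniq u (fun _ _ => 0) hu (zero_isSolution b T) t₁ ht₁ hu0 t ht x
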